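/- Let p ∈ (0,1), ψ > 0, ã_∞ = 1/p − √(4−2p)/(2p) and b̃_∞ = ã_∞(2−p)ψ/(1 − ã_∞ p). Then for all x ∈ [0,ψ], 0 < ã_∞ x + b̃_∞ < ψ. -/

import Mathlib

/-- For all x ∈ [0,ψ], 0 < ã_∞ x + b̃_∞ < ψ. -/
theorem atilde_affine_in_range (p ψ : ℝ) (hp : p ∈ Set.Ioo (0:ℝ) 1) (hψ : 0 < ψ) :
    ∀ x ∈ Set.Icc (0:ℝ) ψ,
      0 < (1 / p - Real.sqrt (4 - 2 * p) / (2 * p)) * x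
            + (1 / p - Real.sqrt (4 - 2 * p) / (2 * p)) * (2 - p) * ψ
              / (1 - (1 / p - Real.sqrt (4 - 2 * p) / (2 * p)) * p) ∧
        (1 / p - Real.sqrt (4 - 2 * p) / (2 * p)) * x
            + (1 / p - Real.sqrt (4 - 2 * p) / (2 * p)) * (2 - p) * ψ
              / (1 - (1 / p - Real.sqrt (4 - 2 * p) / (2 * p)) * p) < ψ := by
  obtain ⟨hp0, hp1⟩ := hp
  rintro x ⟨hx0, hxψ⟩
  set s := Real.sqrt (4 - 2 * p) with hs
  have hs2 : s ^ 2 = 4 - 2 * p := Real.sq_sqrt (by linarith)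
  have hsnn : 0 ≤ s := Real.sqrt_nonneg _
  have hs1 : 1 < s := by nlinarith
  have hslt2 : s < 2 := by nlinarith
  have ha : 1 / p - s / (2 * p) = 1 / (2 + s) := by
    rw [div_sub_div _ _ (by positivity) (by positivity), div_eq_div_iff (by positivity) (by positivity)]
    nlinarith
  rw [ha]
  have hd : 1 - 1 / (2 + s) * p = s / 2 := by
    field_simp
    nlinarith
  rw [hd]
  have hb : 1 / (2 + s) * (2 - p) * ψ / (s / 2) = s / (2 + s) * ψ := by
    field_simp
    linear_combination (-1 : ℝ) * hs2
  rw [hb]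
  have hcomb : 1 / (2 + s) * x + s / (2 + s) * ψ = (x + s * ψ) / (2 + s) := by ring
  rw [hcomb]
  constructor
  · apply div_pos (by nlinarith) (by linarith)
  · rw [div_lt_iff₀ (by linarith)]
    nlinarith
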